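/- (Certifying positivity) Let F be a real square polynomial system and I a strong interval approximate zero satisfying the reality condition {z̄ : z ∈ K_{x,Y}(I)} ⊆ I. If every coordinate interval of Re(I) is contained in the positive reals, then the unique zero of F in I is real with all coordinates strictly positive. -/

import Mathlib

open Set Pointwise

noncomputable section

/-- Pointwise addition of sets of reals. -/
def sadd (X Y : Set ℝ) : Set ℝ := Set.image2 (· + ·) X Y

/-- Pointwise subtraction of sets of reals. -/
def ssub (X Y : Set ℝ) : Set ℝ := Set.image2 (· - ·) X Y

/-- Pointwise multiplication of sets of reals. -/
def smul' (X Y : Set ℝ) : Set ℝ := Set.image2 (· * ·) X Y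

/-- The rectangular complex interval `X + iY`. -/
def cI (X Y : Set ℝ) : Set ℂ := {z | z.re ∈ X ∧ z.im ∈ Y}

/-- Real parts of a set of complex numbers. -/
def reS (S : Set ℂ) : Set ℝ := Complex.re '' S

/-- Imaginary parts of a set of complex numbers. -/
def imS (S : Set ℂ) : Set ℝ := Complex.im '' S

/-- Complex interval multiplication:
`(X+iY)·(W+iZ) = (X·W − Y·Z) + i(X·Z + Y·W)`. -/
def cmul (S T : Set ℂ) : Set ℂ :=
  cI (ssub (smul' (reS S) (reS T)) (smul' (imS S) (imS T)))
     (sadd (smul' (reS S) (imS T)) (smul' (imS S) (reS T)))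

/-- `S` is a rectangular complex interval. -/
def IsRect (S : Set ℂ) : Prop :=
  ∃ a b c d : ℝ, a ≤ b ∧ c ≤ d ∧ S = cI (Set.Icc a b) (Set.Icc c d)

variable {n : ℕ}

/-- The interval vector `I ∈ 𝕀ℂⁿ` determined by coordinate intervals `IV`. -/
def boxSet (IV : Fin n → Set ℂ) : Set (Fin n → ℂ) := {z | ∀ j, z j ∈ IV j}

/-- `F` is a square polynomial system. -/
def IsPolyMap (F : (Fin n → ℂ) → Fin n → ℂ) : Prop :=
  ∀ i, ∃ p : MvPolynomial (Fin n) ℂ, ∀ z, F z i = MvPolynomial.eval z p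

/-- The Jacobian matrix `JF(z)` of `F` at `z`. -/
def jac (F : (Fin n → ℂ) → Fin n → ℂ) (z : Fin n → ℂ) : Matrix (Fin n) (Fin n) ℂ :=
  fun i j => fderiv ℂ (fun w => F w i) z (Pi.single j 1)

/-- Entries of the interval matrix `1ₙ − Y·□JF(I)`, where `MJ` is the interval
enclosure of the Jacobian on `I`, computed in complex interval arithmetic. -/
def Bmat (Y : Matrix (Fin n) (Fin n) ℂ) (MJ : Fin n → Fin n → Set ℂ) :
    Fin n → Fin n → Set ℂ :=
  fun i j => ({(if i = j then (1 : ℂ) else 0)} : Set ℂ) - ∑ k, cmul {Y i k} (MJ k j)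

/-- Coordinates of the Krawczyk set
`K_{x,Y}(I) = x − Y·□F(x) + (1ₙ − Y·□JF(I))(I − x)`, where `FX` is the interval
enclosure `□F(x)` and `MJ` the interval enclosure `□JF(I)`. -/
def Kset (x : Fin n → ℂ) (Y : Matrix (Fin n) (Fin n) ℂ)
    (FX : Fin n → Set ℂ) (MJ : Fin n → Fin n → Set ℂ) (IV : Fin n → Set ℂ) :
    Fin n → Set ℂ :=
  fun i => (({x i} : Set ℂ) - ∑ j, cmul {Y i j} (FX j)) +
      ∑ j, cmul ((IV j) - {x j}) (Bmat Y MJ i j)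

/-- The `∞`-operator norm of a complex matrix (`Fin n → ℂ` carries the max norm). -/
def opNormInf (M : Matrix (Fin n) (Fin n) ℂ) : ℝ :=
  sSup {r | ∃ v : Fin n → ℂ, ‖v‖ = 1 ∧ r = ‖M.mulVec v‖}

/-- The norm `‖A‖_∞` of an interval matrix: the maximum of the `∞`-operator norms
over all matrices contained in it. -/
def imatNorm (B : Fin n → Fin n → Set ℂ) : ℝ :=
  sSup {r | ∃ M : Matrix (Fin n) (Fin n) ℂ, (∀ i j, M i j ∈ B i j) ∧ r = opNormInf M}

/-- `F` is a square polynomial system with real coefficients. -/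
def IsRealPolyMap (F : (Fin n → ℂ) → Fin n → ℂ) : Prop :=
  ∀ i, ∃ p : MvPolynomial (Fin n) ℝ,
    ∀ z, F z i = MvPolynomial.eval z (MvPolynomial.map (algebraMap ℝ ℂ) p)

/-- an ℝ-interval predicate -/
def IsIcc (X : Set ℝ) : Prop := ∃ a b : ℝ, a ≤ b ∧ X = Set.Icc a b

lemma isIcc_image2 (f : ℝ → ℝ → ℝ) (hf : Continuous fun p : ℝ × ℝ => f p.1 p.2)
    {X Y : Set ℝ} (hX : IsIcc X) (hY : IsIcc Y) : IsIcc (Set.image2 f X Y) := by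
  obtain ⟨a, b, hab, rfl⟩ := hX
  obtain ⟨c, d, hcd, rfl⟩ := hY
  have himg : Set.image2 f (Icc a b) (Icc c d)
      = (fun p : ℝ × ℝ => f p.1 p.2) '' (Icc a b ×ˢ Icc c d) := by
    exact (Set.image_prod f).symm
  rw [himg]
  have hcomp : IsCompact ((fun p : ℝ × ℝ => f p.1 p.2) '' (Icc a b ×ˢ Icc c d)) :=
    ((isCompact_Icc.prod isCompact_Icc).image hf)
  have hconn : IsConnected ((fun p : ℝ × ℝ => f p.1 p.2) '' (Icc a b ×ˢ Icc c d)) := by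
    refine IsConnected.image ?_ _ hf.continuousOn
    refine ⟨⟨(a, c), by simp [hab, hcd]⟩, ?_⟩
    exact ((convex_Icc a b).prod (convex_Icc c d)).isPreconnected
  refine ⟨_, _, ?_, eq_Icc_of_connected_compact hconn hcomp⟩
  obtain ⟨x, hx⟩ := hconn.nonempty
  exact le_trans (csInf_le hcomp.bddBelow hx) (le_csSup hcomp.bddAbove hx)

example : True := trivial

lemma isIcc_sadd {X Y : Set ℝ} (hX : IsIcc X) (hY : IsIcc Y) : IsIcc (sadd X Y) :=
  isIcc_image2 _ (continuous_fst.add continuous_snd) hX hY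
lemma isIcc_ssub {X Y : Set ℝ} (hX : IsIcc X) (hY : IsIcc Y) : IsIcc (ssub X Y) :=
  isIcc_image2 _ (continuous_fst.sub continuous_snd) hX hY
lemma isIcc_smul' {X Y : Set ℝ} (hX : IsIcc X) (hY : IsIcc Y) : IsIcc (smul' X Y) :=
  isIcc_image2 _ (continuous_fst.mul continuous_snd) hX hY

lemma isRect_cI {X Y : Set ℝ} (hX : IsIcc X) (hY : IsIcc Y) : IsRect (cI X Y) := by
  obtain ⟨a, b, hab, rfl⟩ := hX; obtain ⟨c, d, hcd, rfl⟩ := hY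
  exact ⟨a, b, c, d, hab, hcd, rfl⟩

lemma IsRect.re_isIcc {S : Set ℂ} (h : IsRect S) : IsIcc (reS S) := by
  obtain ⟨a, b, c, d, hab, hcd, rfl⟩ := h
  refine ⟨a, b, hab, ?_⟩
  ext x; constructor
  · rintro ⟨z, hz, rfl⟩; exact hz.1
  · intro hx; exact ⟨⟨x, c⟩, ⟨by simpa using hx, by simp [hcd]⟩, rfl⟩

lemma IsRect.im_isIcc {S : Set ℂ} (h : IsRect S) : IsIcc (imS S) := by
  obtain ⟨a, b, c, d, hab, hcd, rfl⟩ := h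
  refine ⟨c, d, hcd, ?_⟩
  ext x; constructor
  · rintro ⟨z, hz, rfl⟩; exact hz.2
  · intro hx; exact ⟨⟨a, x⟩, ⟨by simp [hab], by simpa using hx⟩, rfl⟩

lemma IsRect.cmul {S T : Set ℂ} (hS : IsRect S) (hT : IsRect T) : IsRect (cmul S T) :=
  isRect_cI (isIcc_ssub (isIcc_smul' hS.re_isIcc hT.re_isIcc)
      (isIcc_smul' hS.im_isIcc hT.im_isIcc))
    (isIcc_sadd (isIcc_smul' hS.re_isIcc hT.im_isIcc)
      (isIcc_smul' hS.im_isIcc hT.re_isIcc))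

lemma isRect_singleton (c : ℂ) : IsRect {c} := by
  refine ⟨c.re, c.re, c.im, c.im, le_rfl, le_rfl, ?_⟩
  ext z
  simp only [Set.mem_singleton_iff, cI, Set.mem_setOf_eq, Set.mem_Icc, Complex.ext_iff]
  constructor
  · rintro ⟨h1, h2⟩; exact ⟨⟨h1.ge, h1.le⟩, h2.ge, h2.le⟩
  · rintro ⟨⟨h1, h2⟩, h3, h4⟩; exact ⟨le_antisymm h2 h1, le_antisymm h4 h3⟩

lemma IsRect.add {S T : Set ℂ} (hS : IsRect S) (hT : IsRect T) : IsRect (S + T) := by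
  obtain ⟨a, b, c, d, hab, hcd, rfl⟩ := hS
  obtain ⟨a', b', c', d', hab', hcd', rfl⟩ := hT
  refine ⟨a + a', b + b', c + c', d + d', by linarith, by linarith, ?_⟩
  ext z; constructor
  · rintro ⟨u, hu, v, hv, rfl⟩
    exact ⟨⟨add_le_add hu.1.1 hv.1.1, add_le_add hu.1.2 hv.1.2⟩,
           ⟨add_le_add hu.2.1 hv.2.1, add_le_add hu.2.2 hv.2.2⟩⟩
  · rintro ⟨⟨h1, h2⟩, h3, h4⟩
    have hre : z.re ∈ Icc a b + Icc a' b' := by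
      rw [Set.Icc_add_Icc hab hab']; exact ⟨h1, h2⟩
    have him : z.im ∈ Icc c d + Icc c' d' := by
      rw [Set.Icc_add_Icc hcd hcd']; exact ⟨h3, h4⟩
    obtain ⟨x, hx, x', hx', hxx⟩ := hre
    obtain ⟨y, hy, y', hy', hyy⟩ := him
    exact ⟨⟨x, y⟩, ⟨hx, hy⟩, ⟨x', y'⟩, ⟨hx', hy'⟩, by
      apply Complex.ext <;> simp [hxx, hyy]⟩

lemma IsRect.sub {S T : Set ℂ} (hS : IsRect S) (hT : IsRect T) : IsRect (S - T) := by
  obtain ⟨a', b', c', d', hab', hcd', rfl⟩ := hT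
  have : cI (Icc a' b') (Icc c' d') = -(cI (Icc (-b') (-a')) (Icc (-d') (-c'))) := by
    ext z; simp only [cI, Set.mem_neg, Set.mem_setOf_eq, Set.mem_Icc, Complex.neg_re,
      Complex.neg_im]
    constructor <;> rintro ⟨⟨h1, h2⟩, h3, h4⟩ <;> constructor <;> constructor <;> linarith
  rw [sub_eq_add_neg, this, neg_neg]
  exact hS.add ⟨_, _, _, _, by linarith, by linarith, rfl⟩

lemma IsRect.nonempty {S : Set ℂ} (h : IsRect S) : S.Nonempty := by
  obtain ⟨a, b, c, d, hab, hcd, rfl⟩ := h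
  exact ⟨⟨a, c⟩, ⟨by simp [hab], by simp [hcd]⟩⟩

lemma IsRect.convex {S : Set ℂ} (h : IsRect S) : Convex ℝ S := by
  obtain ⟨a, b, c, d, _, _, rfl⟩ := h
  intro z hz w hw s t hs ht hst
  constructor
  · have := (convex_Icc a b) hz.1 hw.1 hs ht hst
    simpa [Complex.add_re, Complex.smul_re] using this
  · have := (convex_Icc c d) hz.2 hw.2 hs ht hst
    simpa [Complex.add_im, Complex.smul_im] using this

lemma IsRect.isClosed {S : Set ℂ} (h : IsRect S) : IsClosed S := by
  obtain ⟨a, b, c, d, _, _, rfl⟩ := h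
  have : cI (Icc a b) (Icc c d) = Complex.re ⁻¹' Icc a b ∩ Complex.im ⁻¹' Icc c d := rfl
  rw [this]
  exact (isClosed_Icc.preimage Complex.continuous_re).inter
    (isClosed_Icc.preimage Complex.continuous_im)

lemma IsRect.bounded {S : Set ℂ} (h : IsRect S) : ∃ C : ℝ, ∀ z ∈ S, ‖z‖ ≤ C := by
  obtain ⟨a, b, c, d, _, _, rfl⟩ := h
  refine ⟨|a| + |b| + |c| + |d|, fun z hz => ?_⟩
  have h1 : |z.re| ≤ |a| + |b| := by
    rcases abs_le_max_abs_abs hz.1.1 hz.1.2 with h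
    calc |z.re| ≤ max |a| |b| := h
    _ ≤ |a| + |b| := max_le (le_add_of_nonneg_right (abs_nonneg _)) (le_add_of_nonneg_left (abs_nonneg _))
  have h2 : |z.im| ≤ |c| + |d| := by
    rcases abs_le_max_abs_abs hz.2.1 hz.2.2 with h
    calc |z.im| ≤ max |c| |d| := h
    _ ≤ |c| + |d| := max_le (le_add_of_nonneg_right (abs_nonneg _)) (le_add_of_nonneg_left (abs_nonneg _))
  calc ‖z‖ ≤ |z.re| + |z.im| := Complex.norm_le_abs_re_add_abs_im z
  _ ≤ (|a| + |b|) + (|c| + |d|) := add_le_add h1 h2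
  _ = _ := by ring

lemma mul_mem_cmul {S T : Set ℂ} {a b : ℂ} (ha : a ∈ S) (hb : b ∈ T) : a * b ∈ cmul S T := by
  refine ⟨⟨a.re * b.re, ⟨a.re, ⟨a, ha, rfl⟩, b.re, ⟨b, hb, rfl⟩, rfl⟩,
          a.im * b.im, ⟨a.im, ⟨a, ha, rfl⟩, b.im, ⟨b, hb, rfl⟩, rfl⟩, ?_⟩,
         ⟨a.re * b.im, ⟨a.re, ⟨a, ha, rfl⟩, b.im, ⟨b, hb, rfl⟩, rfl⟩,
          a.im * b.re, ⟨a.im, ⟨a, ha, rfl⟩, b.re, ⟨b, hb, rfl⟩, rfl⟩, ?_⟩⟩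
  · simp [Complex.mul_re]
  · simp [Complex.mul_im]

lemma sum_mem_setSum {ι : Type*} (s : Finset ι) (f : ι → ℂ) (S : ι → Set ℂ)
    (h : ∀ i ∈ s, f i ∈ S i) : (∑ i ∈ s, f i) ∈ (∑ i ∈ s, S i) := by
  classical
  induction s using Finset.induction_on with
  | empty => simp [Set.mem_zero]
  | insert _ _ hni ih =>
    rename_i a s
    rw [Finset.sum_insert hni, Finset.sum_insert hni]
    exact Set.add_mem_add (h a (Finset.mem_insert_self a s))
      (ih fun i hi => h i (Finset.mem_insert_of_mem hi))

lemma isRect_setSum {ι : Type*} (s : Finset ι) (S : ι → Set ℂ)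
    (h : ∀ i ∈ s, IsRect (S i)) : IsRect (∑ i ∈ s, S i) := by
  classical
  induction s using Finset.induction_on with
  | empty =>
    simp only [Finset.sum_empty]
    have : (0 : Set ℂ) = {0} := rfl
    rw [this]; exact isRect_singleton 0
  | insert _ _ hni ih =>
    rename_i a s
    rw [Finset.sum_insert hni]
    exact (h a (Finset.mem_insert_self a s)).add (ih fun i hi => h i (Finset.mem_insert_of_mem hi))




lemma analytic_eval (p : MvPolynomial (Fin n) ℂ) :
    AnalyticOnNhd ℂ (fun z : Fin n → ℂ => MvPolynomial.eval z p) Set.univ := by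
  intro z _
  have h : AnalyticAt ℂ (fun x : Fin n → ℂ => MvPolynomial.aeval x p) z := by
    refine AnalyticAt.aeval_mvPolynomial (fun i => ?_) p
    exact (ContinuousLinearMap.proj (R := ℂ) (φ := fun _ : Fin n => ℂ) i).analyticAt z
  have he : (fun x : Fin n → ℂ => MvPolynomial.aeval x p)
      = fun z : Fin n → ℂ => MvPolynomial.eval z p := by
    funext x
    simp [MvPolynomial.aeval_def]
  rwa [he] at h

lemma analytic_F {F : (Fin n → ℂ) → Fin n → ℂ} (hF : IsRealPolyMap F) (k : Fin n) :
    AnalyticOnNhd ℂ (fun z => F z k) Set.univ := by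
  obtain ⟨p, hp⟩ := hF k
  have : (fun z => F z k) = fun z : Fin n → ℂ =>
      MvPolynomial.eval z (MvPolynomial.map (algebraMap ℝ ℂ) p) := funext hp
  rw [this]
  exact analytic_eval _

lemma contDiff_F {F : (Fin n → ℂ) → Fin n → ℂ} (hF : IsRealPolyMap F) (k : Fin n) :
    ContDiff ℂ 1 (fun z => F z k) := by
  rw [← contDiffOn_univ]
  exact (analytic_F hF k).contDiffOn uniqueDiffOn_univ

lemma continuous_jac {F : (Fin n → ℂ) → Fin n → ℂ} (hF : IsRealPolyMap F) (k j : Fin n) :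
    Continuous (fun z => jac F z k j) :=
  ((contDiff_F hF k).continuous_fderiv one_ne_zero).clm_apply continuous_const

lemma conj_F {F : (Fin n → ℂ) → Fin n → ℂ} (hF : IsRealPolyMap F) (z : Fin n → ℂ) (k : Fin n) :
    (starRingEnd ℂ) (F z k) = F (fun j => (starRingEnd ℂ) (z j)) k := by
  obtain ⟨p, hp⟩ := hF k
  rw [hp, hp]
  rw [MvPolynomial.eval_map, MvPolynomial.eval_map]
  rw [MvPolynomial.eval₂_comp_left (starRingEnd ℂ)]
  congr 1
  ext r
  simp [Complex.conj_ofReal]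

lemma seg_mem_box {IV : Fin n → Set ℂ} (hIV : ∀ j, IsRect (IV j))
    {u w : Fin n → ℂ} (hu : u ∈ boxSet IV) (hw : w ∈ boxSet IV)
    {t : ℝ} (ht : t ∈ Set.Icc (0:ℝ) 1) : (u + t • (w - u)) ∈ boxSet IV := by
  intro j
  have h := (hIV j).convex (hu j) (hw j) (by linarith [ht.2] : (0:ℝ) ≤ 1 - t) ht.1 (by ring)
  have he : (1 - t) • u j + t • w j = (u + t • (w - u)) j := by
    simp only [Pi.add_apply, Pi.smul_apply, Pi.sub_apply, smul_sub, sub_smul, one_smul]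
    ring
  rwa [he] at h

lemma fderiv_apply_eq_sum {F : (Fin n → ℂ) → Fin n → ℂ} (hF : IsRealPolyMap F)
    (z v : Fin n → ℂ) (k : Fin n) :
    fderiv ℂ (fun w => F w k) z v = ∑ j, v j * jac F z k j := by
  have hv : v = ∑ j, Pi.single j (v j) := (Finset.univ_sum_single v).symm
  conv_lhs => rw [hv, map_sum]
  refine Finset.sum_congr rfl fun j _ => ?_
  have : Pi.single j (v j) = (v j) • (Pi.single j (1:ℂ) : Fin n → ℂ) := by
    rw [← Pi.single_smul, smul_eq_mul, mul_one]
  rw [this, map_smul, smul_eq_mul]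
  rfl


lemma mean_value {F : (Fin n → ℂ) → Fin n → ℂ} (hF : IsRealPolyMap F)
    {IV : Fin n → Set ℂ} (hIV : ∀ j, IsRect (IV j))
    {MJ : Fin n → Fin n → Set ℂ} (hMJr : ∀ i j, IsRect (MJ i j))
    (hMJ : ∀ z ∈ boxSet IV, ∀ i j, jac F z i j ∈ MJ i j)
    {u w : Fin n → ℂ} (hu : u ∈ boxSet IV) (hw : w ∈ boxSet IV) :
    ∃ A : Matrix (Fin n) (Fin n) ℂ, (∀ k j, A k j ∈ MJ k j) ∧
      ∀ k, F w k - F u k = ∑ j, A k j * (w j - u j) := by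
  set γ : ℝ → (Fin n → ℂ) := fun t => u + t • (w - u) with hγdef
  have hγc : Continuous γ := by
    apply continuous_const.add
    exact (continuous_id.smul continuous_const)
  have hjc : ∀ k j, Continuous fun t => jac F (γ t) k j :=
    fun k j => (continuous_jac hF k j).comp hγc
  set μ : MeasureTheory.Measure ℝ := MeasureTheory.volume.restrict (Set.Ioc (0:ℝ) 1) with hμ
  haveI : MeasureTheory.IsProbabilityMeasure μ := by
    constructor
    rw [hμ, MeasureTheory.Measure.restrict_apply_univ, Real.volume_Ioc]
    norm_num
  refine ⟨fun k j => ∫ t, jac F (γ t) k j ∂μ, fun k j => ?_, fun k => ?_⟩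
  · -- membership via convexity
    refine (hMJr k j).convex.integral_mem (hMJr k j).isClosed ?_ ?_
    · refine (MeasureTheory.ae_restrict_mem measurableSet_Ioc).mono fun t ht => ?_
      exact hMJ _ (seg_mem_box hIV hu hw ⟨ht.1.le, ht.2⟩) k j
    · exact ((hjc k j).integrableOn_Ioc)
  · -- FTC
    have hderiv : ∀ t ∈ Set.uIcc (0:ℝ) 1, HasDerivAt (fun t => F (γ t) k)
        (∑ j, (w j - u j) * jac F (γ t) k j) t := by
      intro t _
      have hdF : HasFDerivAt (fun z => F z k) (fderiv ℂ (fun z => F z k) (γ t)) (γ t) :=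
        ((contDiff_F hF k).differentiable one_ne_zero (γ t)).hasFDerivAt
      have hγd : HasDerivAt γ (w - u) t := by
        have h1 : HasDerivAt (fun s : ℝ => s • (w - u)) ((1:ℝ) • (w - u)) t :=
          (hasDerivAt_id t).smul_const (w - u)
        simpa [hγdef] using h1.const_add u
      have := (hdF.restrictScalars ℝ).comp_hasDerivAt t hγd
      have he := fderiv_apply_eq_sum hF (γ t) (w - u) k
      simp only [Pi.sub_apply] at he
      rw [← he]
      exact this
    have hint : IntervalIntegrable (fun t => ∑ j, (w j - u j) * jac F (γ t) k j)
        MeasureTheory.volume 0 1 :=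
      (continuous_finset_sum _ fun j _ => continuous_const.mul (hjc k j)).intervalIntegrable 0 1
    have hFTC := intervalIntegral.integral_eq_sub_of_hasDerivAt hderiv hint
    have hγ1 : γ 1 = w := by simp [hγdef]
    have hγ0 : γ 0 = u := by simp [hγdef]
    rw [hγ1, hγ0] at hFTC
    rw [← hFTC, intervalIntegral.integral_of_le zero_le_one]
    rw [MeasureTheory.integral_finset_sum (f := fun j t => (w j - u j) * jac F (γ t) k j) _ fun j _ =>
      ((continuous_const.mul (hjc k j)).integrableOn_Ioc)]
    refine Finset.sum_congr rfl fun j _ => ?_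
    rw [MeasureTheory.integral_const_mul, mul_comm]





lemma mulVec_norm_le (M : Matrix (Fin n) (Fin n) ℂ) {v : Fin n → ℂ} (hv : ‖v‖ = 1) :
    ‖M.mulVec v‖ ≤ ∑ i, ∑ j, ‖M i j‖ := by
  have hC : (0:ℝ) ≤ ∑ i, ∑ j, ‖M i j‖ :=
    Finset.sum_nonneg fun i _ => Finset.sum_nonneg fun j _ => norm_nonneg _
  rw [pi_norm_le_iff_of_nonneg hC]
  intro i
  have h1 : ‖M.mulVec v i‖ ≤ ∑ j, ‖M i j‖ := by
    simp only [Matrix.mulVec, dotProduct]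
    refine (norm_sum_le _ _).trans (Finset.sum_le_sum fun j _ => ?_)
    rw [norm_mul]
    calc ‖M i j‖ * ‖v j‖ ≤ ‖M i j‖ * ‖v‖ :=
          mul_le_mul_of_nonneg_left (norm_le_pi_norm v j) (norm_nonneg _)
    _ = ‖M i j‖ := by rw [hv, mul_one]
  refine h1.trans ?_
  exact Finset.single_le_sum (fun i _ => Finset.sum_nonneg fun j _ => norm_nonneg _)
    (Finset.mem_univ i)

lemma contraction {B : Fin n → Fin n → Set ℂ} (hB : ∀ i j, IsRect (B i j))
    {M : Matrix (Fin n) (Fin n) ℂ} (hM : ∀ i j, M i j ∈ B i j)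
    (hnorm : Real.sqrt 2 * imatNorm B < 1) {v : Fin n → ℂ}
    (hfix : M.mulVec v = v) : v = 0 := by
  by_contra hv0
  have hvpos : (0:ℝ) < ‖v‖ := norm_pos_iff.mpr hv0
  -- unit vector
  set u : Fin n → ℂ := ((‖v‖⁻¹ : ℝ) : ℂ) • v with hu
  have hu1 : ‖u‖ = 1 := by
    rw [hu, norm_smul]
    simp [Complex.norm_real, abs_of_pos (inv_pos.mpr hvpos), inv_mul_cancel₀ hvpos.ne']
  have hMu : M.mulVec u = u := by
    rw [hu, Matrix.mulVec_smul, hfix]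
  -- entry bounds for all matrices in B
  choose C hC using fun i j => (hB i j).bounded
  set D : ℝ := ∑ i, ∑ j, C i j with hD
  have hDb : ∀ (M' : Matrix (Fin n) (Fin n) ℂ), (∀ i j, M' i j ∈ B i j) →
      ∀ r ∈ {r | ∃ v : Fin n → ℂ, ‖v‖ = 1 ∧ r = ‖M'.mulVec v‖}, r ≤ D := by
    rintro M' hM' r ⟨w, hw, rfl⟩
    refine (mulVec_norm_le M' hw).trans ?_
    exact Finset.sum_le_sum fun i _ => Finset.sum_le_sum fun j _ => hC i j _ (hM' i j)
  have hD0 : (0:ℝ) ≤ D :=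
    Finset.sum_nonneg fun i _ => Finset.sum_nonneg fun j _ =>
      (norm_nonneg (M i j)).trans (hC i j _ (hM i j))
  -- opNormInf M ≥ 1
  have h1 : (1:ℝ) ≤ opNormInf M := by
    have hmem : (1:ℝ) ∈ {r | ∃ v : Fin n → ℂ, ‖v‖ = 1 ∧ r = ‖M.mulVec v‖} :=
      ⟨u, hu1, by rw [hMu, hu1]⟩
    exact le_csSup ⟨D, fun r hr => hDb M hM r hr⟩ hmem
  -- opNormInf M' ≤ D for all M' in B
  have hop_le : ∀ (M' : Matrix (Fin n) (Fin n) ℂ), (∀ i j, M' i j ∈ B i j) →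
      opNormInf M' ≤ D := fun M' hM' => Real.sSup_le (hDb M' hM') hD0
  -- imatNorm B ≥ opNormInf M
  have h2 : opNormInf M ≤ imatNorm B := by
    refine le_csSup ⟨D, ?_⟩ ⟨M, hM, rfl⟩
    rintro r ⟨M', hM', rfl⟩
    exact hop_le M' hM'
  have hs2 : (1:ℝ) < Real.sqrt 2 := by
    rw [show (1:ℝ) = Real.sqrt 1 by simp]
    exact Real.sqrt_lt_sqrt (by norm_num) (by norm_num)
  have : (1:ℝ) < Real.sqrt 2 * imatNorm B := by
    calc (1:ℝ) < Real.sqrt 2 * 1 := by linarith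
    _ ≤ Real.sqrt 2 * imatNorm B := by
        have : (1:ℝ) ≤ imatNorm B := h1.trans h2
        nlinarith [Real.sqrt_nonneg 2]
  linarith

theorem certify_positivity (F : (Fin n → ℂ) → Fin n → ℂ) (hF : IsRealPolyMap F)
    (IV : Fin n → Set ℂ) (hIV : ∀ j, IsRect (IV j))
    (x : Fin n → ℂ) (hx : x ∈ boxSet IV)
    (Y : Matrix (Fin n) (Fin n) ℂ) (hY : IsUnit Y)
    (FX : Fin n → Set ℂ) (hFXr : ∀ j, IsRect (FX j)) (hFX : ∀ j, F x j ∈ FX j)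
    (MJ : Fin n → Fin n → Set ℂ) (hMJr : ∀ i j, IsRect (MJ i j))
    (hMJ : ∀ z ∈ boxSet IV, ∀ i j, jac F z i j ∈ MJ i j)
    (hK : ∀ i, Kset x Y FX MJ IV i ⊆ IV i)
    (hnorm : Real.sqrt 2 * imatNorm (Bmat Y MJ) < 1)
    (hconj : ∀ i, (fun w : ℂ => (starRingEnd ℂ) w) '' Kset x Y FX MJ IV i ⊆ IV i)
    (hpos : ∀ j, ∀ w ∈ IV j, 0 < w.re) :
    ∀ z ∈ boxSet IV, F z = 0 → ∀ j, (z j).im = 0 ∧ 0 < (z j).re := by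
  intro z hz hFz
  have hFz' : ∀ k, F z k = 0 := fun k => congrFun hFz k
  -- Step 1: z ∈ Kset coordinatewise
  obtain ⟨A, hA, hAeq⟩ := mean_value hF hIV hMJr hMJ hx hz
  have hKz : ∀ i, z i ∈ Kset x Y FX MJ IV i := by
    intro i
    have hFx : ∀ k, F x k = -∑ j, A k j * (z j - x j) := by
      intro k
      have h := hAeq k
      rw [hFz' k] at h
      linear_combination -h
    have h1 : ∑ j, (z j - x j) * (if i = j then (1:ℂ) else 0) = z i - x i := by
      simp [mul_ite, Finset.sum_ite_eq, eq_comm]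
    have h2 : ∑ j, (z j - x j) * ∑ k, Y i k * A k j = ∑ k, -(Y i k * F x k) := by
      simp_rw [Finset.mul_sum]
      rw [Finset.sum_comm]
      refine Finset.sum_congr rfl fun k _ => ?_
      rw [hFx k, mul_neg, neg_neg, Finset.mul_sum]
      exact Finset.sum_congr rfl fun j _ => by ring
    have h3 : ∑ j, (z j - x j) * ((if i = j then (1:ℂ) else 0) - ∑ k, Y i k * A k j)
        = (z i - x i) - ∑ k, -(Y i k * F x k) := by
      simp only [mul_sub, Finset.sum_sub_distrib, h1, h2]
    have hzi : z i = (x i - ∑ j, Y i j * F x j)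
        + ∑ j, (z j - x j) * ((if i = j then (1:ℂ) else 0) - ∑ k, Y i k * A k j) := by
      rw [h3]
      simp only [neg_mul, Finset.sum_neg_distrib]
      ring
    rw [hzi]
    refine Set.add_mem_add ?_ ?_
    · refine Set.sub_mem_sub rfl ?_
      exact sum_mem_setSum _ _ _ fun j _ => mul_mem_cmul rfl (hFX j)
    · refine sum_mem_setSum _ _ _ fun j _ => ?_
      refine mul_mem_cmul (Set.sub_mem_sub (hz j) rfl) ?_
      exact Set.sub_mem_sub rfl (sum_mem_setSum _ _ _ fun k _ => mul_mem_cmul rfl (hA k j))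
  -- Step 2: conjugate is in the box and is a zero
  set zb : Fin n → ℂ := fun j => (starRingEnd ℂ) (z j) with hzb
  have hzbbox : zb ∈ boxSet IV := fun i => hconj i ⟨z i, hKz i, rfl⟩
  have hFzb : ∀ k, F zb k = 0 := by
    intro k
    rw [← conj_F hF z k, hFz' k, map_zero]
  -- Step 3: uniqueness via contraction
  obtain ⟨A', hA', hAeq'⟩ := mean_value hF hIV hMJr hMJ hzbbox hz
  set v : Fin n → ℂ := z - zb with hv
  have hA'v : A'.mulVec v = 0 := by
    funext k
    have h := hAeq' k
    rw [hFz' k, hFzb k] at h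
    simp only [Matrix.mulVec, dotProduct, Pi.zero_apply, hv, Pi.sub_apply]
    linear_combination -h
  have hfix : (1 - Y * A').mulVec v = v := by
    rw [Matrix.sub_mulVec, Matrix.one_mulVec, ← Matrix.mulVec_mulVec, hA'v,
      Matrix.mulVec_zero, sub_zero]
  have hBrect : ∀ i j, IsRect (Bmat Y MJ i j) := fun i j =>
    (isRect_singleton _).sub (isRect_setSum _ _ fun k _ => (isRect_singleton _).cmul (hMJr k j))
  have hMB : ∀ i j, (1 - Y * A') i j ∈ Bmat Y MJ i j := by
    intro i j
    have he : (1 - Y * A') i j = (if i = j then (1:ℂ) else 0) - ∑ k, Y i k * A' k j := by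
      simp [Matrix.sub_apply, Matrix.one_apply, Matrix.mul_apply]
    rw [he]
    exact Set.sub_mem_sub rfl (sum_mem_setSum _ _ _ fun k _ => mul_mem_cmul rfl (hA' k j))
  have hv0 : v = 0 := contraction hBrect hMB hnorm hfix
  have hzzb : ∀ j, z j = (starRingEnd ℂ) (z j) := by
    intro j
    have : z j - zb j = 0 := congrFun hv0 j
    have h := sub_eq_zero.mp this
    simpa [hzb] using h
  intro j
  constructor
  · have := (hzzb j).symm
    exact (Complex.conj_eq_iff_im.mp this)
  · exact hpos j (z j) (hz j)
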